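/- Let D be a finite skeletal EI-category. For each object a let G_a = D(a,a) be its automorphism group and let E_a be a complete set of primitive orthogonal idempotents of the group algebra ℂG_a. Then: (1) the union ⋃_{a ∈ D⁰} E_a is a complete set of primitive orthogonal idempotents of the category algebra ℂD; (2) for e ∈ E_a and f ∈ E_b, the left ℂD-modules ℂD·e and ℂD·f are isomorphic if and only if a = b and ℂG_a·e ≅ ℂG_a·f as left ℂG_a-modules. -/

import Mathlib

set_option linter.unusedSectionVars false

open CategoryTheory

namespace CatAlgebra

variable (C : Type) [Category.{0} C] [Fintype C] [∀ a b : C, Fintype (a ⟶ b)]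
  [DecidableEq C] [∀ a b : C, DecidableEq (a ⟶ b)]

/-- The type of morphisms of `C`, bundled with their endpoints. -/
abbrev Mor := Σ a b : C, a ⟶ b

instance : Fintype (Mor C) := by unfold Mor; infer_instance
instance : DecidableEq (Mor C) := by unfold Mor; exact Sigma.instDecidableEqSigma

variable {C}

/-- Partial composition: `pcomp p q` is "`p` after `q`" when defined. -/
def pcomp (p q : Mor C) : Option (Mor C) :=
  if h : q.2.1 = p.1 then some ⟨q.1, p.2.1, (q.2.2 ≫ eqToHom h) ≫ p.2.2⟩ else none

lemma pcomp_assoc (p q r : Mor C) :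
    (pcomp p q).bind (fun s => pcomp s r) = (pcomp q r).bind (fun s => pcomp p s) := by
  obtain ⟨a, b, f⟩ := p
  obtain ⟨c, d, g⟩ := q
  obtain ⟨e, e', h⟩ := r
  by_cases h1 : d = a <;> by_cases h2 : e' = c <;>
    simp [pcomp, h1, h2, Category.assoc]

/-- The identity morphism at `a`, as an element of `Mor C`. -/
def idMor (a : C) : Mor C := ⟨a, a, 𝟙 a⟩

lemma idMor_injective : Function.Injective (idMor (C := C)) := by
  intro a b h
  exact congrArg Sigma.fst h

lemma pcomp_idMor_left (q : Mor C) : pcomp (idMor q.2.1) q = some q := by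
  obtain ⟨a, b, f⟩ := q
  simp [pcomp, idMor]
  exact (congrArg (f ≫ ·) (eqToHom_refl _ _)).trans (Category.comp_id f)

lemma pcomp_idMor_right (p : Mor C) : pcomp p (idMor p.1) = some p := by
  obtain ⟨a, b, f⟩ := p
  simp [pcomp, idMor]

lemma eq_of_pcomp_idMor_left {a : C} {q m : Mor C} (h : pcomp (idMor a) q = some m) :
    q = m ∧ a = q.2.1 := by
  obtain ⟨c, d, g⟩ := q
  by_cases h1 : d = a
  · subst h1
    simp [pcomp, idMor] at h
    subst h
    exact ⟨congrArg (fun k => (⟨c, d, k⟩ : Mor C))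
      ((congrArg (g ≫ ·) (eqToHom_refl _ _)).trans (Category.comp_id g)).symm, rfl⟩
  · simp [pcomp, idMor, h1] at h

lemma eq_of_pcomp_idMor_right {a : C} {p m : Mor C} (h : pcomp p (idMor a) = some m) :
    p = m ∧ a = p.1 := by
  obtain ⟨c, d, g⟩ := p
  by_cases h1 : a = c
  · subst h1
    simp [pcomp, idMor] at h
    subst h
    exact ⟨rfl, rfl⟩
  · simp [pcomp, idMor, h1] at h

variable (C)

/-- The complex category algebra of a finite category `C`: the vector space of
`ℂ`-valued functions on the set of morphisms of `C`, with convolution product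
(`m' ⋅ m` is the composite when defined and `0` otherwise). -/
def CatAlg : Type := Mor C → ℂ

noncomputable instance : AddCommGroup (CatAlg C) := by unfold CatAlg; infer_instance
noncomputable instance : Module ℂ (CatAlg C) := by unfold CatAlg; infer_instance

variable {C}

noncomputable instance : Mul (CatAlg C) :=
  ⟨fun x y m => ∑ p : Mor C, ∑ q : Mor C, if pcomp p q = some m then x p * y q else 0⟩

lemma mul_def (x y : CatAlg C) (m : Mor C) :
    (x * y) m = ∑ p : Mor C, ∑ q : Mor C, if pcomp p q = some m then x p * y q else 0 := rfl

noncomputable instance : One (CatAlg C) :=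
  ⟨fun m => ∑ a : C, if m = idMor a then 1 else 0⟩

lemma one_def (m : Mor C) : (1 : CatAlg C) m = ∑ a : C, if m = idMor a then 1 else 0 := rfl

lemma one_apply_idMor (a : C) : (1 : CatAlg C) (idMor a) = 1 := by
  rw [one_def, Finset.sum_eq_single a]
  · simp
  · intro b _ hb
    rw [if_neg fun h => hb (idMor_injective h).symm]
  · simp

private lemma sum_option_eq (m : Mor C) (o : Option (Mor C)) (g : Mor C → Option (Mor C))
    (T : ℂ) :
    (∑ s : Mor C, if o = some s ∧ g s = some m then T else 0) =
      if o.bind g = some m then T else 0 := by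
  cases o with
  | none => simp
  | some s₀ =>
    rw [Finset.sum_eq_single s₀]
    · simp
    · intro b _ hb
      simp only [Option.some_inj]
      rw [if_neg]
      rintro ⟨h1, -⟩
      exact hb h1.symm
    · simp

private lemma swap4 (F : Mor C → Mor C → Mor C → Mor C → ℂ) :
    (∑ s : Mor C, ∑ r : Mor C, ∑ p : Mor C, ∑ q : Mor C, F s r p q) =
      ∑ p : Mor C, ∑ q : Mor C, ∑ r : Mor C, ∑ s : Mor C, F s r p q :=
  calc (∑ s : Mor C, ∑ r : Mor C, ∑ p : Mor C, ∑ q : Mor C, F s r p q)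
      = ∑ r : Mor C, ∑ s : Mor C, ∑ p : Mor C, ∑ q : Mor C, F s r p q := Finset.sum_comm
    _ = ∑ r : Mor C, ∑ p : Mor C, ∑ s : Mor C, ∑ q : Mor C, F s r p q :=
        Finset.sum_congr rfl fun r _ => Finset.sum_comm
    _ = ∑ r : Mor C, ∑ p : Mor C, ∑ q : Mor C, ∑ s : Mor C, F s r p q :=
        Finset.sum_congr rfl fun r _ => Finset.sum_congr rfl fun p _ => Finset.sum_comm
    _ = ∑ p : Mor C, ∑ r : Mor C, ∑ q : Mor C, ∑ s : Mor C, F s r p q := Finset.sum_comm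
    _ = ∑ p : Mor C, ∑ q : Mor C, ∑ r : Mor C, ∑ s : Mor C, F s r p q :=
        Finset.sum_congr rfl fun p _ => Finset.sum_comm

private lemma swap3 (F : Mor C → Mor C → Mor C → ℂ) :
    (∑ s : Mor C, ∑ q : Mor C, ∑ r : Mor C, F s q r) =
      ∑ q : Mor C, ∑ r : Mor C, ∑ s : Mor C, F s q r :=
  calc (∑ s : Mor C, ∑ q : Mor C, ∑ r : Mor C, F s q r)
      = ∑ q : Mor C, ∑ s : Mor C, ∑ r : Mor C, F s q r := Finset.sum_comm
    _ = ∑ q : Mor C, ∑ r : Mor C, ∑ s : Mor C, F s q r :=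
        Finset.sum_congr rfl fun q _ => Finset.sum_comm

private lemma mul_assoc' (x y z : CatAlg C) : x * y * z = x * (y * z) := by
  funext m
  rw [mul_def, mul_def]
  have lhs : (∑ s : Mor C, ∑ r : Mor C, if pcomp s r = some m then (x * y) s * z r else 0)
      = ∑ p : Mor C, ∑ q : Mor C, ∑ r : Mor C,
          if (pcomp p q).bind (fun s => pcomp s r) = some m then x p * y q * z r else 0 := by
    have step : ∀ s r : Mor C, (if pcomp s r = some m then (x * y) s * z r else 0)
        = ∑ p : Mor C, ∑ q : Mor C,
            if pcomp p q = some s ∧ pcomp s r = some m then x p * y q * z r else 0 := by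
      intro s r
      by_cases hsr : pcomp s r = some m
      · simp only [hsr, if_pos, and_true, mul_def, Finset.sum_mul, ite_mul, zero_mul]
      · simp [hsr]
    simp only [step]
    rw [swap4]
    refine Finset.sum_congr rfl fun p _ => Finset.sum_congr rfl fun q _ =>
      Finset.sum_congr rfl fun r _ => ?_
    exact sum_option_eq m (pcomp p q) (fun s => pcomp s r) _
  have rhs : (∑ p : Mor C, ∑ s : Mor C, if pcomp p s = some m then x p * (y * z) s else 0)
      = ∑ p : Mor C, ∑ q : Mor C, ∑ r : Mor C,
          if (pcomp q r).bind (fun s => pcomp p s) = some m then x p * (y q * z r) else 0 := by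
    have step : ∀ p s : Mor C, (if pcomp p s = some m then x p * (y * z) s else 0)
        = ∑ q : Mor C, ∑ r : Mor C,
            if pcomp q r = some s ∧ pcomp p s = some m then x p * (y q * z r) else 0 := by
      intro p s
      by_cases hps : pcomp p s = some m
      · simp only [hps, if_pos, and_true, mul_def, Finset.mul_sum, mul_ite, mul_zero]
      · simp [hps]
    simp only [step]
    refine Finset.sum_congr rfl fun p _ => ?_
    rw [swap3]
    refine Finset.sum_congr rfl fun q _ => Finset.sum_congr rfl fun r _ => ?_
    exact sum_option_eq m (pcomp q r) (fun s => pcomp p s) _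
  rw [lhs, rhs]
  refine Finset.sum_congr rfl fun p _ => Finset.sum_congr rfl fun q _ =>
    Finset.sum_congr rfl fun r _ => ?_
  rw [pcomp_assoc, mul_assoc]

private lemma one_mul' (x : CatAlg C) : 1 * x = x := by
  funext m
  rw [mul_def, Finset.sum_eq_single (idMor m.2.1)]
  · rw [Finset.sum_eq_single m]
    · rw [if_pos (pcomp_idMor_left m), one_apply_idMor, one_mul]
    · intro q _ hq
      rw [if_neg fun h => hq (eq_of_pcomp_idMor_left h).1]
    · simp
  · intro p _ hp
    refine Finset.sum_eq_zero fun q _ => ?_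
    split_ifs with h
    · have h1 : (1 : CatAlg C) p = 0 := by
        rw [one_def]
        refine Finset.sum_eq_zero fun a _ => ?_
        rw [if_neg]
        intro hpa
        subst hpa
        obtain ⟨hq, ha⟩ := eq_of_pcomp_idMor_left h
        exact hp (by rw [ha, hq])
      rw [h1, zero_mul]
    · rfl
  · simp

private lemma mul_one' (x : CatAlg C) : x * 1 = x := by
  funext m
  rw [mul_def, Finset.sum_eq_single m]
  · rw [Finset.sum_eq_single (idMor m.1)]
    · rw [if_pos (pcomp_idMor_right m), one_apply_idMor, mul_one]
    · intro q _ hq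
      split_ifs with h
      · have h1 : (1 : CatAlg C) q = 0 := by
          rw [one_def]
          refine Finset.sum_eq_zero fun a _ => ?_
          rw [if_neg]
          intro hqa
          subst hqa
          obtain ⟨hm, ha⟩ := eq_of_pcomp_idMor_right h
          exact hq (by rw [ha, hm])
        rw [h1, mul_zero]
      · rfl
    · simp
  · intro p _ hp
    refine Finset.sum_eq_zero fun q _ => ?_
    split_ifs with h
    · have h1 : (1 : CatAlg C) q ≠ 0 → q = idMor q.1 := by
        intro hne
        rw [one_def] at hne
        by_contra hq
        refine hne (Finset.sum_eq_zero fun a _ => ?_)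
        rw [if_neg]
        intro hqa
        apply hq
        rw [hqa]
        rfl
      by_cases hz : (1 : CatAlg C) q = 0
      · rw [hz, mul_zero]
      · exfalso
        have hqi := h1 hz
        rw [hqi] at h
        exact hp (eq_of_pcomp_idMor_right h).1
    · rfl
  · simp

private lemma left_distrib' (x y z : CatAlg C) : x * (y + z) = x * y + x * z := by
  funext m
  show (x * (y + z)) m = (x * y) m + (x * z) m
  rw [mul_def, mul_def, mul_def, ← Finset.sum_add_distrib]
  refine Finset.sum_congr rfl fun p _ => ?_
  rw [← Finset.sum_add_distrib]
  refine Finset.sum_congr rfl fun q _ => ?_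
  have : (y + z) q = y q + z q := rfl
  split_ifs with h <;> simp [this, mul_add]

private lemma right_distrib' (x y z : CatAlg C) : (x + y) * z = x * z + y * z := by
  funext m
  show ((x + y) * z) m = (x * z) m + (y * z) m
  rw [mul_def, mul_def, mul_def, ← Finset.sum_add_distrib]
  refine Finset.sum_congr rfl fun p _ => ?_
  rw [← Finset.sum_add_distrib]
  refine Finset.sum_congr rfl fun q _ => ?_
  have : (x + y) p = x p + y p := rfl
  split_ifs with h <;> simp [this, add_mul]

private lemma zero_mul' (x : CatAlg C) : 0 * x = 0 := by
  funext m
  show (0 * x) m = 0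
  rw [mul_def]
  refine Finset.sum_eq_zero fun p _ => Finset.sum_eq_zero fun q _ => ?_
  have : (0 : CatAlg C) p = 0 := rfl
  split_ifs <;> simp [this]

private lemma mul_zero' (x : CatAlg C) : x * 0 = 0 := by
  funext m
  show (x * 0) m = 0
  rw [mul_def]
  refine Finset.sum_eq_zero fun p _ => Finset.sum_eq_zero fun q _ => ?_
  have : (0 : CatAlg C) q = 0 := rfl
  split_ifs <;> simp [this]

noncomputable instance : Ring (CatAlg C) where
  __ := (inferInstance : AddCommGroup (CatAlg C))
  mul := (· * ·)
  one := 1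
  mul_assoc := mul_assoc'
  one_mul := one_mul'
  mul_one := mul_one'
  left_distrib := left_distrib'
  right_distrib := right_distrib'
  zero_mul := zero_mul'
  mul_zero := mul_zero'

noncomputable instance : Algebra ℂ (CatAlg C) :=
  Algebra.ofModule
    (fun r x y => by
      funext m
      show ((r • x) * y) m = r • ((x * y) m)
      rw [mul_def, mul_def, Finset.smul_sum]
      refine Finset.sum_congr rfl fun p _ => ?_
      rw [Finset.smul_sum]
      refine Finset.sum_congr rfl fun q _ => ?_
      have : (r • x) p = r • x p := rfl
      split_ifs <;> simp [this, smul_mul_assoc, mul_assoc])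
    (fun r x y => by
      funext m
      show (x * (r • y)) m = r • ((x * y) m)
      rw [mul_def, mul_def, Finset.smul_sum]
      refine Finset.sum_congr rfl fun p _ => ?_
      rw [Finset.smul_sum]
      refine Finset.sum_congr rfl fun q _ => ?_
      have : (r • y) q = r • y q := rfl
      split_ifs <;> simp [this, mul_smul_comm, mul_left_comm])

end CatAlgebra

open CategoryTheory CatAlgebra

section Idempotents

variable {A : Type*} [Ring A]

/-- A primitive idempotent: a nonzero idempotent which is not the sum of two nonzero
orthogonal idempotents. -/
def IsPrimitiveIdempotent (e : A) : Prop :=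
  IsIdempotentElem e ∧ e ≠ 0 ∧
    ∀ f g : A, IsIdempotentElem f → IsIdempotentElem g → f * g = 0 → g * f = 0 →
      e = f + g → f = 0 ∨ g = 0

/-- A complete set of primitive orthogonal idempotents of `A`. -/
def IsCompleteOrthogonalPrimitiveSet (S : Finset A) : Prop :=
  (∀ e ∈ S, IsPrimitiveIdempotent e) ∧
    (∀ e ∈ S, ∀ f ∈ S, e ≠ f → e * f = 0 ∧ f * e = 0) ∧ (∑ e ∈ S, e) = 1

end Idempotents

variable {D : Type} [Category.{0} D] [Fintype D] [∀ a b : D, Fintype (a ⟶ b)]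
  [DecidableEq D] [∀ a b : D, DecidableEq (a ⟶ b)]

/-- The basis element of the category algebra corresponding to a single morphism. -/
noncomputable def delta (m₀ : Mor D) : CatAlg D := fun m => if m = m₀ then 1 else 0

/-- The canonical embedding of the group algebra `ℂ D(a,a)` of the endomorphism
group of an object `a` into the category algebra of `D`. -/
noncomputable def endEmbed (a : D) (x : MonoidAlgebra ℂ (CategoryTheory.End a)) : CatAlg D :=
  letI : Fintype (CategoryTheory.End a) := inferInstanceAs (Fintype (a ⟶ a))
  ∑ g : CategoryTheory.End a, x.coeff g • delta (⟨a, a, g⟩ : Mor D)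

/-- The union `⋃ₐ Eₐ` of the given complete sets of primitive orthogonal idempotents of
the group algebras of the endomorphism groups, viewed inside the category algebra. -/
noncomputable def unionIdem (E : ∀ a : D, Finset (MonoidAlgebra ℂ (CategoryTheory.End a))) :
    Finset (CatAlg D) :=
  letI : DecidableEq (CatAlg D) := Classical.decEq _
  Finset.univ.biUnion (fun a => (E a).image (endEmbed a))

/-! ### Auxiliary lemmas -/

section Aux

instance instFintypeEnd (a : D) : Fintype (CategoryTheory.End a) :=
  inferInstanceAs (Fintype (a ⟶ a))

instance instDecEqEnd (a : D) : DecidableEq (CategoryTheory.End a) :=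
  inferInstanceAs (DecidableEq (a ⟶ a))

lemma endEmbed_apply (a : D) (x : MonoidAlgebra ℂ (CategoryTheory.End a)) (m : Mor D) :
    endEmbed a x m =
      ∑ g : CategoryTheory.End a, x.coeff g * (if m = ⟨a, a, g⟩ then 1 else 0) := by
  show (∑ g : CategoryTheory.End a, x.coeff g • delta (⟨a, a, g⟩ : Mor D)) m = _
  refine (Finset.sum_apply (M := fun _ : Mor D => ℂ) m Finset.univ
    (fun g => x.coeff g • delta (⟨a, a, g⟩ : Mor D))).trans ?_
  rfl

lemma endEmbed_apply_self (a : D) (x : MonoidAlgebra ℂ (CategoryTheory.End a))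
    (g : CategoryTheory.End a) :
    endEmbed a x ⟨a, a, g⟩ = x.coeff g := by
  rw [endEmbed_apply, Finset.sum_eq_single g]
  · simp
  · intro h _ hh
    rw [if_neg, mul_zero]
    intro hEq
    apply hh
    simpa using hEq.symm
  · simp

lemma endEmbed_apply_ne (a : D) (x : MonoidAlgebra ℂ (CategoryTheory.End a)) (m : Mor D)
    (h : ¬(m.1 = a ∧ m.2.1 = a)) : endEmbed a x m = 0 := by
  rw [endEmbed_apply]
  refine Finset.sum_eq_zero fun g _ => ?_
  rw [if_neg, mul_zero]
  rintro rfl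
  exact h ⟨rfl, rfl⟩

lemma endEmbed_injective (a : D) :
    Function.Injective (endEmbed (D := D) a) := by
  intro x y hxy
  refine MonoidAlgebra.ext (Finsupp.ext fun g => ?_)
  have := congrFun hxy (⟨a, a, g⟩ : Mor D)
  rwa [endEmbed_apply_self, endEmbed_apply_self] at this

lemma endEmbed_zero (a : D) : endEmbed a (0 : MonoidAlgebra ℂ (CategoryTheory.End a)) = 0 := by
  funext m
  rw [endEmbed_apply]
  simp
  rfl

lemma endEmbed_add (a : D) (x y : MonoidAlgebra ℂ (CategoryTheory.End a)) :
    endEmbed a (x + y) = endEmbed a x + endEmbed a y := by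
  funext m
  show endEmbed a (x + y) m = endEmbed a x m + endEmbed a y m
  rw [endEmbed_apply, endEmbed_apply, endEmbed_apply, ← Finset.sum_add_distrib]
  refine Finset.sum_congr rfl fun g _ => ?_
  have : (x + y).coeff g = x.coeff g + y.coeff g := rfl
  rw [this, add_mul]

lemma endEmbed_one (a : D) :
    endEmbed a (1 : MonoidAlgebra ℂ (CategoryTheory.End a)) = delta (idMor a) := by
  funext m
  rw [endEmbed_apply, Finset.sum_eq_single (1 : CategoryTheory.End a)]
  · rw [MonoidAlgebra.one_def, MonoidAlgebra.coeff_single, Finsupp.single_apply, if_pos rfl, one_mul]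
    rfl
  · intro g _ hg
    rw [MonoidAlgebra.one_def, MonoidAlgebra.coeff_single, Finsupp.single_apply, if_neg fun h => hg h.symm, zero_mul]
  · simp

/-- Restrict a sum over all morphisms to the endomorphisms of `a`. -/
lemma sum_mor (a : D) (F : Mor D → ℂ)
    (hF : ∀ m : Mor D, ¬(m.1 = a ∧ m.2.1 = a) → F m = 0) :
    ∑ m : Mor D, F m = ∑ g : CategoryTheory.End a, F ⟨a, a, g⟩ := by
  classical
  set ι : CategoryTheory.End a → Mor D := fun g => ⟨a, a, g⟩ with hι
  have hinj : ∀ x ∈ (Finset.univ : Finset (CategoryTheory.End a)),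
      ∀ y ∈ (Finset.univ : Finset (CategoryTheory.End a)), ι x = ι y → x = y := by
    intro x _ y _ h
    simpa [hι] using h
  have himg := Finset.sum_image (s := Finset.univ) (g := ι) (f := F) hinj
  rw [show (∑ g : CategoryTheory.End a, F ⟨a, a, g⟩)
      = ∑ m ∈ Finset.univ.image ι, F m from himg.symm]
  refine (Finset.sum_subset (Finset.subset_univ _) ?_).symm
  intro m _ hm
  refine hF m ?_
  rintro ⟨h1, h2⟩
  apply hm
  obtain ⟨c, d, g⟩ := m
  dsimp at h1 h2
  subst h1; subst h2
  exact Finset.mem_image.mpr ⟨g, Finset.mem_univ g, rfl⟩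

lemma pcomp_eq {p q m : Mor D} (h : pcomp p q = some m) :
    q.2.1 = p.1 ∧ m.1 = q.1 ∧ m.2.1 = p.2.1 := by
  unfold pcomp at h
  split at h
  · rename_i hc
    injection h with h
    subst h
    exact ⟨hc, rfl, rfl⟩
  · cases h

lemma endEmbed_mul (a : D) (x y : MonoidAlgebra ℂ (CategoryTheory.End a)) :
    endEmbed a (x * y) = endEmbed a x * endEmbed a y := by
  funext m
  rw [mul_def]
  rw [sum_mor a _ (fun p hp => Finset.sum_eq_zero fun q _ => by
    rw [endEmbed_apply_ne a x p hp]
    split_ifs <;> simp)]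
  have inner : ∀ g : CategoryTheory.End a,
      (∑ q : Mor D, if pcomp ⟨a, a, g⟩ q = some m
          then endEmbed a x ⟨a, a, g⟩ * endEmbed a y q else 0)
        = ∑ h : CategoryTheory.End a, if m = ⟨a, a, (g * h : CategoryTheory.End a)⟩
            then x.coeff g * y.coeff h else 0 := by
    intro g
    rw [sum_mor a _ (fun q hq => by
      rw [endEmbed_apply_ne a y q hq]
      split_ifs <;> simp)]
    refine Finset.sum_congr rfl fun h _ => ?_
    have hpc : pcomp (⟨a, a, g⟩ : Mor D) ⟨a, a, h⟩
        = some ⟨a, a, (g * h : CategoryTheory.End a)⟩ := by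
      show pcomp _ _ = some ⟨a, a, h ≫ g⟩
      simp [pcomp]
    rw [hpc, endEmbed_apply_self, endEmbed_apply_self]
    simp only [Option.some_inj]
    exact if_congr eq_comm rfl rfl
  simp only [inner]
  -- now the left-hand side
  rw [endEmbed_apply]
  have hmulapp : ∀ k : CategoryTheory.End a, (x * y).coeff k
      = ∑ g : CategoryTheory.End a, ∑ h : CategoryTheory.End a,
          if g * h = k then x.coeff g * y.coeff h else 0 := by
    intro k
    rw [MonoidAlgebra.coeff_mul, Finsupp.sum_fintype]
    · refine Finset.sum_congr rfl fun g _ => ?_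
      rw [Finsupp.sum_fintype]
      intro h
      simp
    · intro g
      simp [Finsupp.sum]
  simp only [hmulapp, Finset.sum_mul]
  rw [Finset.sum_comm]
  refine Finset.sum_congr rfl fun g _ => ?_
  rw [Finset.sum_comm]
  refine Finset.sum_congr rfl fun h _ => ?_
  rw [Finset.sum_eq_single ((g * h : CategoryTheory.End a))]
  · rw [if_pos rfl]
    by_cases hm : m = (⟨a, a, (g * h : CategoryTheory.End a)⟩ : Mor D)
    · rw [if_pos hm, if_pos hm, mul_one]
    · rw [if_neg hm, if_neg hm, mul_zero]
  · intro k _ hk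
    rw [if_neg fun hh => hk hh.symm, zero_mul]
  · simp

lemma supp_mul_left (a : D) (x : MonoidAlgebra ℂ (CategoryTheory.End a)) (z : CatAlg D)
    (m : Mor D) (h : (endEmbed a x * z) m ≠ 0) : m.2.1 = a := by
  by_contra hm
  apply h
  rw [mul_def]
  refine Finset.sum_eq_zero fun p _ => Finset.sum_eq_zero fun q _ => ?_
  split_ifs with hc
  · by_cases hp : p.1 = a ∧ p.2.1 = a
    · exact absurd ((pcomp_eq hc).2.2.trans hp.2) hm
    · rw [endEmbed_apply_ne a x p hp, zero_mul]
  · rfl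

lemma supp_mul_right (a : D) (x : MonoidAlgebra ℂ (CategoryTheory.End a)) (z : CatAlg D)
    (m : Mor D) (h : (z * endEmbed a x) m ≠ 0) : m.1 = a := by
  by_contra hm
  apply h
  rw [mul_def]
  refine Finset.sum_eq_zero fun p _ => Finset.sum_eq_zero fun q _ => ?_
  split_ifs with hc
  · by_cases hq : q.1 = a ∧ q.2.1 = a
    · exact absurd ((pcomp_eq hc).2.1.trans hq.1) hm
    · rw [endEmbed_apply_ne a x q hq, mul_zero]
  · rfl

lemma exists_endEmbed_of_supp (a : D) (w : CatAlg D)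
    (h : ∀ m : Mor D, w m ≠ 0 → m.1 = a ∧ m.2.1 = a) :
    ∃ x : MonoidAlgebra ℂ (CategoryTheory.End a), w = endEmbed a x := by
  refine ⟨MonoidAlgebra.ofCoeff (Finsupp.equivFunOnFinite.symm (fun g : CategoryTheory.End a => w ⟨a, a, g⟩)), ?_⟩
  funext m
  by_cases hm : m.1 = a ∧ m.2.1 = a
  · obtain ⟨c, d, g⟩ := m
    obtain ⟨h1, h2⟩ := hm
    dsimp at h1 h2
    subst h1; subst h2
    rw [endEmbed_apply_self]
    simp
  · rw [endEmbed_apply_ne a _ m hm]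
    by_contra hw
    exact hm (h m hw)

lemma endEmbed_mul_ne (a b : D) (hab : a ≠ b) (x : MonoidAlgebra ℂ (CategoryTheory.End a))
    (y : MonoidAlgebra ℂ (CategoryTheory.End b)) :
    endEmbed a x * endEmbed b y = 0 := by
  funext m
  show (endEmbed a x * endEmbed b y) m = (0 : ℂ)
  rw [mul_def]
  refine Finset.sum_eq_zero fun p _ => Finset.sum_eq_zero fun q _ => ?_
  split_ifs with hc
  · by_cases hp : p.1 = a ∧ p.2.1 = a
    · by_cases hq : q.1 = b ∧ q.2.1 = b
      · exact absurd (hq.2.symm.trans ((pcomp_eq hc).1.trans hp.1)).symm hab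
      · rw [endEmbed_apply_ne b y q hq, mul_zero]
    · rw [endEmbed_apply_ne a x p hp, zero_mul]
  · rfl

lemma endEmbed_ne_zero (a : D) {x : MonoidAlgebra ℂ (CategoryTheory.End a)} (hx : x ≠ 0) :
    endEmbed a x ≠ 0 := fun h => hx (endEmbed_injective a (h.trans (endEmbed_zero a).symm))

lemma eq_of_hom (hskel : Skeletal D) (hEI : ∀ (c : D) (f : c ⟶ c), IsIso f)
    {a b : D} (f : a ⟶ b) (g : b ⟶ a) : a = b := by
  haveI h1 : IsIso (f ≫ g) := hEI a _
  haveI h2 : IsIso (g ≫ f) := hEI b _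
  haveI : IsIso f := by
    refine ⟨g ≫ inv (f ≫ g), ?_, ?_⟩
    · rw [← Category.assoc, IsIso.hom_inv_id]
    · have hc : (g ≫ f) ≫ ((g ≫ inv (f ≫ g)) ≫ f) = (g ≫ f) ≫ 𝟙 b := by
        calc (g ≫ f) ≫ (g ≫ inv (f ≫ g)) ≫ f
            = g ≫ ((f ≫ g) ≫ inv (f ≫ g)) ≫ f := by simp only [Category.assoc]
          _ = (g ≫ f) ≫ 𝟙 b := by rw [IsIso.hom_inv_id]; simp
      exact (cancel_epi (g ≫ f)).mp hc
  exact hskel ⟨asIso f⟩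

lemma mem_unionIdem {E : ∀ a : D, Finset (MonoidAlgebra ℂ (CategoryTheory.End a))}
    {x : CatAlg D} : x ∈ unionIdem E ↔ ∃ a, ∃ e ∈ E a, endEmbed a e = x := by
  unfold unionIdem
  simp [Finset.mem_biUnion, Finset.mem_image]

lemma endEmbed_sum (a : D) (s : Finset (MonoidAlgebra ℂ (CategoryTheory.End a))) :
    endEmbed a (∑ e ∈ s, e) = ∑ e ∈ s, endEmbed a e := by
  classical
  induction s using Finset.induction_on with
  | empty => simpa using endEmbed_zero a
  | insert x t hx ih => rw [Finset.sum_insert hx, Finset.sum_insert hx, endEmbed_add, ih]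

end Aux

section Corner

variable {A : Type*} [Ring A]

lemma mul_idem_of_mem_span {e x : A} (he : IsIdempotentElem e)
    (hx : x ∈ Submodule.span A {e}) : x * e = x := by
  obtain ⟨r, rfl⟩ := Submodule.mem_span_singleton.mp hx
  rw [smul_eq_mul, mul_assoc, he]

/-- The standard equivalence `Ae ≃ Af` induced by `u ∈ eAf`, `v ∈ fAe` with
`uv = e`, `vu = f`. -/
noncomputable def cornerEquiv (e f u v : A) (he : IsIdempotentElem e) (hf : IsIdempotentElem f)
    (hu : u * f = u) (hv : v * e = v) (huv : u * v = e) (hvu : v * u = f) :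
    (Submodule.span A {e}) ≃ₗ[A] (Submodule.span A {f}) where
  toFun x := ⟨x.1 * u,
    Submodule.mem_span_singleton.mpr ⟨x.1 * u, by rw [smul_eq_mul, mul_assoc, hu]⟩⟩
  map_add' x y := Subtype.ext (add_mul _ _ _)
  map_smul' r x := Subtype.ext (by simp [mul_assoc])
  invFun y := ⟨y.1 * v,
    Submodule.mem_span_singleton.mpr ⟨y.1 * v, by rw [smul_eq_mul, mul_assoc, hv]⟩⟩
  left_inv x := Subtype.ext (by
    show x.1 * u * v = x.1
    rw [mul_assoc, huv, mul_idem_of_mem_span he x.2])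
  right_inv y := Subtype.ext (by
    show y.1 * v * u = y.1
    rw [mul_assoc, hvu, mul_idem_of_mem_span hf y.2])

lemma exists_corner {e f : A} (he : IsIdempotentElem e) (hf : IsIdempotentElem f)
    (φ : (Submodule.span A {e}) ≃ₗ[A] (Submodule.span A {f})) :
    ∃ u v : A, e * u = u ∧ u * f = u ∧ f * v = v ∧ v * e = v ∧ u * v = e ∧ v * u = f := by
  have heMem : e ∈ Submodule.span A {e} := Submodule.mem_span_singleton_self e
  have hfMem : f ∈ Submodule.span A {f} := Submodule.mem_span_singleton_self f
  set eE : Submodule.span A {e} := ⟨e, heMem⟩ with heE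
  set fF : Submodule.span A {f} := ⟨f, hfMem⟩ with hfF
  refine ⟨(φ eE).1, (φ.symm fF).1, ?_, ?_, ?_, ?_, ?_, ?_⟩
  · have h1 : eE = e • eE := Subtype.ext (by simp [heE, he.eq])
    have h2 := congrArg (fun z => (φ z).1) h1
    simp only [map_smul, SetLike.val_smul, smul_eq_mul] at h2
    exact h2.symm
  · exact mul_idem_of_mem_span hf (φ eE).2
  · have h1 : fF = f • fF := Subtype.ext (by simp [hfF, hf.eq])
    have h2 := congrArg (fun z => (φ.symm z).1) h1
    simp only [map_smul, SetLike.val_smul, smul_eq_mul] at h2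
    exact h2.symm
  · exact mul_idem_of_mem_span he (φ.symm fF).2
  · have h3 : φ eE = (φ eE).1 • fF := Subtype.ext (by
      simp only [SetLike.val_smul, smul_eq_mul, hfF]
      exact (mul_idem_of_mem_span hf (φ eE).2).symm)
    have := congrArg (fun z => (φ.symm z).1) h3
    simp only [LinearEquiv.symm_apply_apply, map_smul, SetLike.val_smul, smul_eq_mul] at this
    rw [heE] at this
    exact this.symm
  · have h3 : φ.symm fF = (φ.symm fF).1 • eE := Subtype.ext (by
      simp only [SetLike.val_smul, smul_eq_mul, heE]
      exact (mul_idem_of_mem_span he (φ.symm fF).2).symm)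
    have := congrArg (fun z => (φ z).1) h3
    simp only [LinearEquiv.apply_symm_apply, map_smul, SetLike.val_smul, smul_eq_mul] at this
    rw [hfF] at this
    exact this.symm

end Corner

/-- Let `D` be a finite skeletal EI-category, and for each object `a` let `E a` be a
complete set of primitive orthogonal idempotents of the group algebra `ℂ D(a,a)`.
Then (1) the union of the `E a`, viewed inside the category algebra `ℂ D` (via the
canonical embeddings of the `ℂ D(a,a)`), is a complete set of primitive orthogonal
idempotents of `ℂ D`; and (2) for `e ∈ E a` and `f ∈ E b`, the left ideals
`ℂD⋅e` and `ℂD⋅f` are isomorphic as left `ℂD`-modules if and only if `a = b` and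
`ℂ D(a,a)⋅e ≅ ℂ D(a,a)⋅f` as `ℂ D(a,a)`-modules. -/
theorem unionIdem_isCompleteOrthogonalPrimitiveSet_and_iso_iff
    (hskel : Skeletal D) (hEI : ∀ (a : D) (f : a ⟶ a), IsIso f)
    (E : ∀ a : D, Finset (MonoidAlgebra ℂ (CategoryTheory.End a)))
    (hE : ∀ a : D, IsCompleteOrthogonalPrimitiveSet (E a)) :
    IsCompleteOrthogonalPrimitiveSet (unionIdem E) ∧
    ∀ (a b : D) (e : MonoidAlgebra ℂ (CategoryTheory.End a))
      (f : MonoidAlgebra ℂ (CategoryTheory.End b)), e ∈ E a → f ∈ E b →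
      (Nonempty ((Submodule.span (CatAlg D) {endEmbed a e}) ≃ₗ[CatAlg D]
          (Submodule.span (CatAlg D) {endEmbed b f})) ↔
        ∃ h : a = b,
          Nonempty ((Submodule.span (MonoidAlgebra ℂ (CategoryTheory.End b)) {h ▸ e})
            ≃ₗ[MonoidAlgebra ℂ (CategoryTheory.End b)]
              (Submodule.span (MonoidAlgebra ℂ (CategoryTheory.End b)) {f}))) := by
  have heIdem : ∀ (a : D) (e : MonoidAlgebra ℂ (CategoryTheory.End a)),
      e ∈ E a → IsIdempotentElem e := fun a e he => ((hE a).1 e he).1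
  have heNe : ∀ (a : D) (e : MonoidAlgebra ℂ (CategoryTheory.End a)),
      e ∈ E a → e ≠ 0 := fun a e he => ((hE a).1 e he).2.1
  constructor
  · refine ⟨?_, ?_, ?_⟩
    · -- primitivity
      intro x hx
      obtain ⟨a, e, he, rfl⟩ := mem_unionIdem.mp hx
      have hee : IsIdempotentElem (endEmbed a e) := by
        show endEmbed a e * endEmbed a e = endEmbed a e
        rw [← endEmbed_mul, heIdem a e he]
      refine ⟨hee, endEmbed_ne_zero a (heNe a e he), ?_⟩
      intro p q hp hq hpq hqp hsum
      have hEp : endEmbed a e * p = p := by rw [hsum, add_mul, hp, hqp, add_zero]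
      have hpE : p * endEmbed a e = p := by rw [hsum, mul_add, hp, hpq, add_zero]
      have hEq' : endEmbed a e * q = q := by rw [hsum, add_mul, hq, hpq, zero_add]
      have hqE : q * endEmbed a e = q := by rw [hsum, mul_add, hq, hqp, zero_add]
      obtain ⟨p0, rfl⟩ := exists_endEmbed_of_supp a p (fun m hm =>
        ⟨supp_mul_right a e p m (by rw [hpE]; exact hm),
         supp_mul_left a e p m (by rw [hEp]; exact hm)⟩)
      obtain ⟨q0, rfl⟩ := exists_endEmbed_of_supp a q (fun m hm =>
        ⟨supp_mul_right a e q m (by rw [hqE]; exact hm),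
         supp_mul_left a e q m (by rw [hEq']; exact hm)⟩)
      have hp0 : IsIdempotentElem p0 := endEmbed_injective a (by rw [endEmbed_mul]; exact hp)
      have hq0 : IsIdempotentElem q0 := endEmbed_injective a (by rw [endEmbed_mul]; exact hq)
      have hpq0 : p0 * q0 = 0 := endEmbed_injective a
        (by rw [endEmbed_mul, endEmbed_zero]; exact hpq)
      have hqp0 : q0 * p0 = 0 := endEmbed_injective a
        (by rw [endEmbed_mul, endEmbed_zero]; exact hqp)
      have hsum0 : e = p0 + q0 := endEmbed_injective a (by rw [endEmbed_add]; exact hsum)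
      rcases ((hE a).1 e he).2.2 p0 q0 hp0 hq0 hpq0 hqp0 hsum0 with h | h
      · left; rw [h, endEmbed_zero]
      · right; rw [h, endEmbed_zero]
    · -- orthogonality
      intro x hx y hy hxy
      obtain ⟨a, e, he, rfl⟩ := mem_unionIdem.mp hx
      obtain ⟨b, f, hf, rfl⟩ := mem_unionIdem.mp hy
      by_cases hab : a = b
      · subst hab
        have hef : e ≠ f := fun h => hxy (by rw [h])
        obtain ⟨h1, h2⟩ := (hE a).2.1 e he f hf hef
        exact ⟨by rw [← endEmbed_mul, h1, endEmbed_zero],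
          by rw [← endEmbed_mul, h2, endEmbed_zero]⟩
      · exact ⟨endEmbed_mul_ne a b hab e f, endEmbed_mul_ne b a (Ne.symm hab) f e⟩
    · -- sum = 1
      letI : DecidableEq (CatAlg D) := Classical.decEq _
      have hdisj : Set.PairwiseDisjoint (↑(Finset.univ : Finset D))
          (fun a => (E a).image (endEmbed a)) := by
        intro a _ b _ hab
        refine Finset.disjoint_left.mpr fun x hxa hxb => ?_
        obtain ⟨e, he, rfl⟩ := Finset.mem_image.mp hxa
        obtain ⟨f, hf, hef⟩ := Finset.mem_image.mp hxb
        obtain ⟨g, hg⟩ := Finsupp.ne_iff.mp (show e.coeff ≠ 0 from fun h => heNe a e he (MonoidAlgebra.ext h))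
        simp only [Finsupp.coe_zero, Pi.zero_apply] at hg
        apply hg
        have h1 := congrFun hef (⟨a, a, g⟩ : Mor D)
        rw [endEmbed_apply_self, endEmbed_apply_ne b f _ (fun hh => hab hh.1)] at h1
        exact h1.symm
      unfold unionIdem
      rw [Finset.sum_biUnion hdisj]
      have himg : ∀ a : D, ∑ x ∈ (E a).image (endEmbed a), x = endEmbed a 1 := by
        intro a
        rw [Finset.sum_image (fun x _ y _ h => endEmbed_injective a h), ← endEmbed_sum,
          (hE a).2.2]
      simp only [himg, endEmbed_one]
      funext m
      rw [show ((∑ a : D, delta (idMor a) : CatAlg D)) m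
          = ∑ a : D, delta (idMor a) m from Finset.sum_apply _ _ _, one_def]
      rfl
  · -- part 2
    intro a b e f he hf
    have hea : IsIdempotentElem e := heIdem a e he
    have hfb : IsIdempotentElem f := heIdem b f hf
    have hEa : IsIdempotentElem (endEmbed a e) := by
      show endEmbed a e * endEmbed a e = endEmbed a e
      rw [← endEmbed_mul, hea]
    have hFb : IsIdempotentElem (endEmbed b f) := by
      show endEmbed b f * endEmbed b f = endEmbed b f
      rw [← endEmbed_mul, hfb]
    constructor
    · rintro ⟨φ⟩
      obtain ⟨U, V, hU0, hU1, hV0, hV1, hUV, hVU⟩ := exists_corner hEa hFb φ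
      have hUsupp : ∀ m : Mor D, U m ≠ 0 → m.1 = b ∧ m.2.1 = a := fun m hm =>
        ⟨supp_mul_right b f U m (by rw [hU1]; exact hm),
         supp_mul_left a e U m (by rw [hU0]; exact hm)⟩
      have hVsupp : ∀ m : Mor D, V m ≠ 0 → m.1 = a ∧ m.2.1 = b := fun m hm =>
        ⟨supp_mul_right a e V m (by rw [hV1]; exact hm),
         supp_mul_left b f V m (by rw [hV0]; exact hm)⟩
      have hab : a = b := by
        have hne : endEmbed a e ≠ 0 := endEmbed_ne_zero a (heNe a e he)
        have hex : ∃ m : Mor D, (U * V) m ≠ 0 := by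
          by_contra hcon
          push_neg at hcon
          exact hne (by rw [← hUV]; funext m; exact hcon m)
        obtain ⟨m, hm⟩ := hex
        rw [mul_def] at hm
        obtain ⟨p, -, hp⟩ := Finset.exists_ne_zero_of_sum_ne_zero hm
        obtain ⟨q, -, hq⟩ := Finset.exists_ne_zero_of_sum_ne_zero hp
        have hcond : pcomp p q = some m ∧ U p * V q ≠ 0 := by
          by_cases hc : pcomp p q = some m
          · exact ⟨hc, by rwa [if_pos hc] at hq⟩
          · exact absurd (if_neg hc) hq
        have hUp : U p ≠ 0 := left_ne_zero_of_mul hcond.2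
        have hVq : V q ≠ 0 := right_ne_zero_of_mul hcond.2
        obtain ⟨hp1, hp2⟩ := hUsupp p hUp
        obtain ⟨hq1, hq2⟩ := hVsupp q hVq
        obtain ⟨c, d, gm⟩ := p
        obtain ⟨c', d', gm'⟩ := q
        dsimp at hp1 hp2 hq1 hq2
        subst hp1; subst hp2; subst hq1; subst hq2
        exact eq_of_hom hskel hEI gm' gm
      subst hab
      obtain ⟨u, rfl⟩ := exists_endEmbed_of_supp a U hUsupp
      obtain ⟨v, rfl⟩ := exists_endEmbed_of_supp a V hVsupp
      have hu1 : u * f = u := endEmbed_injective a (by rw [endEmbed_mul]; exact hU1)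
      have hv1 : v * e = v := endEmbed_injective a (by rw [endEmbed_mul]; exact hV1)
      have huv : u * v = e := endEmbed_injective a (by rw [endEmbed_mul]; exact hUV)
      have hvu : v * u = f := endEmbed_injective a (by rw [endEmbed_mul]; exact hVU)
      exact ⟨rfl, ⟨cornerEquiv e f u v hea hfb hu1 hv1 huv hvu⟩⟩
    · rintro ⟨rfl, ⟨ψ⟩⟩
      obtain ⟨u, v, hu0, hu1, hv0, hv1, huv, hvu⟩ := exists_corner hea hfb ψ
      exact ⟨cornerEquiv (endEmbed a e) (endEmbed a f) (endEmbed a u) (endEmbed a v) hEa hFb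
        (by rw [← endEmbed_mul, hu1]) (by rw [← endEmbed_mul, hv1])
        (by rw [← endEmbed_mul, huv]) (by rw [← endEmbed_mul, hvu])⟩
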